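/- Fix 0 < A < 1/2 sufficiently small. For z ≥ 2 with z ≤ U^A, we have ∑_{d ∈ U_z(U)} 1/d = O( V(z) + log z + V(z) log U ), where U_z(U) = {1 ≤ d ≤ U : gcd(d, P(z)) = 1} and V(z) = ∏_{p<z}(1 − 1/p). -/

import Mathlib

open Finset

/-- `P(z) = ∏_{p < z, p prime} p`. -/
def primorialBelowNat (z : ℕ) : ℕ := ∏ p ∈ z.primesBelow, p

/-- `V(z) = ∏_{p<z}(1-1/p)`. -/
noncomputable def mertensVNat (z : ℕ) : ℝ := ∏ p ∈ z.primesBelow, (1 - 1 / (p : ℝ))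

section AuxiliaryLemmas

open Nat



/-- `n ↦ n^c` as a `MonoidHom ℕ →* ℝ`. -/
noncomputable def natPowHom (c : ℝ) : ℕ →* ℝ where
  toFun n := (n : ℝ) ^ c
  map_one' := by simp
  map_mul' m n := by
    push_cast
    exact Real.mul_rpow (Nat.cast_nonneg m) (Nat.cast_nonneg n)

lemma natPowHom_apply (c : ℝ) (n : ℕ) : natPowHom c n = (n : ℝ) ^ c := rfl

lemma natPowHom_prime_norm_lt_one {c : ℝ} (hc : c < 0) {p : ℕ} (hp : p.Prime) :
    ‖natPowHom c p‖ < 1 := by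
  rw [natPowHom_apply, Real.norm_eq_abs,
    abs_of_nonneg (Real.rpow_nonneg (Nat.cast_nonneg p) c)]
  exact Real.rpow_lt_one_of_one_lt_of_neg (by exact_mod_cast hp.one_lt) hc

lemma euler_summable {c : ℝ} (hc : c < 0) (s : Finset ℕ) :
    Summable (fun m : Nat.factoredNumbers s ↦ ((m : ℕ) : ℝ) ^ c) :=
  (EulerProduct.summable_and_hasSum_factoredNumbers_prod_filter_prime_geometric
    (f := natPowHom c) (fun hp => natPowHom_prime_norm_lt_one hc hp) s).2.summable

lemma euler_tsum {c : ℝ} (hc : c < 0) (s : Finset ℕ) :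
    ∑' m : Nat.factoredNumbers s, ((m : ℕ) : ℝ) ^ c
      = ∏ p ∈ s with p.Prime, (1 - (p : ℝ) ^ c)⁻¹ :=
  (EulerProduct.summable_and_hasSum_factoredNumbers_prod_filter_prime_geometric
    (f := natPowHom c) (fun hp => natPowHom_prime_norm_lt_one hc hp) s).2.tsum_eq


/-- Chebyshev-type bound: `∑_{p ≤ n} log p ≤ n log 4`. -/
lemma theta_le (n : ℕ) :
    ∑ p ∈ (n + 1).primesBelow, Real.log p ≤ n * Real.log 4 := by
  have h4 : (primorial n : ℝ) ≤ (4 : ℝ) ^ n := by exact_mod_cast primorial_le_4_pow n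
  have hprim : (primorial n : ℝ) = ∏ p ∈ (n + 1).primesBelow, (p : ℝ) := by
    rw [primorial, Nat.primesBelow]
    push_cast
    rfl
  have hpos : ∀ p ∈ (n + 1).primesBelow, (0:ℝ) < p := fun p hp => by
    exact_mod_cast (Nat.prime_of_mem_primesBelow hp).pos
  calc ∑ p ∈ (n + 1).primesBelow, Real.log p
      = Real.log (∏ p ∈ (n + 1).primesBelow, (p : ℝ)) := by
        rw [Real.log_prod (fun p hp => (hpos p hp).ne')]
    _ ≤ Real.log ((4 : ℝ) ^ n) := by
        apply Real.log_le_log (by rw [← hprim]; exact_mod_cast (primorial_pos n))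
        rw [← hprim]; exact h4
    _ = n * Real.log 4 := by rw [Real.log_pow]


lemma log_factorial_eq (n : ℕ) :
    Real.log (n ! : ℕ) =
      ∑ p ∈ (n + 1).primesBelow, ((n !).factorization p : ℝ) * Real.log p := by
  have hfne : (n ! : ℕ) ≠ 0 := (Nat.factorial_pos n).ne'
  have hsub : (n !).factorization.support ⊆ (n + 1).primesBelow := by
    intro p hp
    rw [Nat.support_factorization] at hp
    have hp' := Nat.prime_of_mem_primeFactors hp
    have hdvd := Nat.dvd_of_mem_primeFactors hp
    exact Nat.mem_primesBelow.mpr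
      ⟨Nat.lt_succ_of_le ((Nat.Prime.dvd_factorial hp').mp hdvd), hp'⟩
  calc Real.log (n ! : ℕ)
      = Real.log (∏ p ∈ (n !).factorization.support, ((p : ℝ)) ^ (n !).factorization p) := by
        conv_lhs => rw [← Nat.factorization_prod_pow_eq_self hfne]
        rw [Finsupp.prod]
        push_cast
        rfl
    _ = ∑ p ∈ (n !).factorization.support, ((n !).factorization p : ℝ) * Real.log p := by
        rw [Real.log_prod]
        · apply Finset.sum_congr rfl
          intro p hp
          rw [Real.log_pow]
        · intro p hp
          rw [Nat.support_factorization] at hp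
          have hp' := Nat.prime_of_mem_primeFactors hp
          exact pow_ne_zero _ (by exact_mod_cast hp'.pos.ne')
    _ = ∑ p ∈ (n + 1).primesBelow, ((n !).factorization p : ℝ) * Real.log p := by
        apply Finset.sum_subset hsub
        intro p _ hp
        rw [Finsupp.notMem_support_iff.mp hp]
        simp

/-- `∑_{p ≤ n} log p / p ≤ log n + log 4` (Mertens' first theorem, upper bound). -/
lemma mertens_first (n : ℕ) (hn : 2 ≤ n)
    (htheta : ∑ p ∈ (n + 1).primesBelow, Real.log p ≤ n * Real.log 4) :
    ∑ p ∈ (n + 1).primesBelow, Real.log p / p ≤ Real.log n + Real.log 4 := by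
  have hn0 : (0:ℝ) < n := by positivity
  have hfac : ∀ p ∈ (n + 1).primesBelow, (n / p : ℕ) ≤ (n !).factorization p := by
    intro p hp
    obtain ⟨hplt, hpp⟩ := Nat.mem_primesBelow.mp hp
    have hple : p ≤ n := Nat.lt_succ_iff.mp hplt
    refine (Nat.Prime.pow_dvd_iff_le_factorization hpp (Nat.factorial_pos n).ne').mp ?_
    rw [Nat.Prime.pow_dvd_factorial_iff hpp (lt_succ_self (Nat.log p n))]
    have hmem : 1 ∈ Finset.Ico 1 (Nat.log p n).succ := by
      simp only [Finset.mem_Ico]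
      exact ⟨le_refl 1, Nat.lt_succ_of_le (Nat.log_pos hpp.one_lt hple)⟩
    have := Finset.single_le_sum (f := fun i => n / p ^ i) (fun i _ => Nat.zero_le _) hmem
    simpa using this
  have key : ∑ p ∈ (n + 1).primesBelow, ((n:ℝ)/p - 1) * Real.log p ≤ n * Real.log n := by
    calc ∑ p ∈ (n + 1).primesBelow, ((n:ℝ)/p - 1) * Real.log p
        ≤ ∑ p ∈ (n + 1).primesBelow, ((n !).factorization p : ℝ) * Real.log p := by
          apply Finset.sum_le_sum
          intro p hp
          obtain ⟨hplt, hpp⟩ := Nat.mem_primesBelow.mp hp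
          have hp0 : (0:ℝ) < p := by exact_mod_cast hpp.pos
          have hlogp : (0:ℝ) ≤ Real.log p := Real.log_nonneg (by exact_mod_cast hpp.one_lt.le)
          apply mul_le_mul_of_nonneg_right _ hlogp
          have hmod : (n:ℝ) < p * ((n / p : ℕ) : ℝ) + p := by
            have h1 : p * (n / p) + n % p = n := Nat.div_add_mod n p
            have h2 : n % p < p := Nat.mod_lt n hpp.pos
            have : n < p * (n / p) + p := by omega
            exact_mod_cast this
          have h1 : (n:ℝ)/p - 1 < ((n / p : ℕ) : ℝ) := by
            rw [div_sub_one hp0.ne', div_lt_iff₀ hp0]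
            nlinarith
          have h2 : ((n / p : ℕ) : ℝ) ≤ ((n !).factorization p : ℝ) := by
            exact_mod_cast hfac p hp
          linarith
      _ = Real.log (n ! : ℕ) := (log_factorial_eq n).symm
      _ ≤ Real.log ((n:ℝ)^n) := by
          apply Real.log_le_log (by exact_mod_cast Nat.factorial_pos n)
          exact_mod_cast Nat.factorial_le_pow n
      _ = n * Real.log n := by rw [Real.log_pow]
  have expand : ∑ p ∈ (n + 1).primesBelow, ((n:ℝ)/p - 1) * Real.log p
      = n * (∑ p ∈ (n + 1).primesBelow, Real.log p / p)
        - ∑ p ∈ (n + 1).primesBelow, Real.log p := by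
    rw [Finset.mul_sum, ← Finset.sum_sub_distrib]
    apply Finset.sum_congr rfl
    intro p hp
    have hp0 : ((p:ℝ)) ≠ 0 := by
      exact_mod_cast (Nat.prime_of_mem_primesBelow hp).pos.ne'
    field_simp
  rw [expand] at key
  have h3 : n * (∑ p ∈ (n + 1).primesBelow, Real.log p / p)
      ≤ n * (Real.log n + Real.log 4) := by rw [mul_add]; linarith
  exact le_of_mul_le_mul_left h3 hn0


lemma rpow_sub_one_le (σ : ℝ) (hσ0 : 0 < σ) (hσ34 : σ ≤ 3/4) {p : ℕ} (hp : 2 ≤ p) :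
    (p:ℝ) ^ (σ - 1) ≤ 6/7 := by
  have hp0 : (0:ℝ) < p := by positivity
  have hlog2 : Real.log 2 ≤ Real.log p := Real.log_le_log (by norm_num) (by exact_mod_cast hp)
  have hlog2pos : (0:ℝ) < Real.log 2 := Real.log_pos (by norm_num)
  have e1 : Real.log p * (σ - 1) ≤ Real.log 2 * (-(1/4)) := by nlinarith
  have hb : (p:ℝ) ^ (σ - 1) ≤ (2:ℝ) ^ (-(1/4) : ℝ) := by
    rw [Real.rpow_def_of_pos hp0, Real.rpow_def_of_pos (by norm_num : (0:ℝ) < 2)]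
    exact Real.exp_le_exp.mpr e1
  refine hb.trans ?_
  have hx0 : (0:ℝ) ≤ (2:ℝ) ^ ((1:ℝ)/4) := Real.rpow_nonneg (by norm_num) _
  have h4 : ((2:ℝ) ^ ((1:ℝ)/4)) ^ (4:ℕ) = 2 := by
    rw [← Real.rpow_natCast ((2:ℝ) ^ ((1:ℝ)/4)) 4, ← Real.rpow_mul (by norm_num)]
    norm_num
  have h76 : (7/6 : ℝ) ≤ (2:ℝ) ^ ((1:ℝ)/4) := by
    by_contra h
    push_neg at h
    have := pow_lt_pow_left₀ h hx0 (n := 4) (by norm_num)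
    rw [h4] at this
    norm_num at this
  calc (2:ℝ) ^ (-(1/4) : ℝ) = ((2:ℝ) ^ ((1:ℝ)/4))⁻¹ := by
        rw [← Real.rpow_neg (by norm_num)]
    _ ≤ ((7:ℝ)/6)⁻¹ := inv_anti₀ (by norm_num) h76
    _ = 6/7 := by norm_num

lemma aux_ratio {a b t E : ℝ} (ha0 : 0 < a) (hb67 : b ≤ 6/7) (hab : a ≤ b) (ht0 : 0 ≤ t)
    (hbma : b - a ≤ t * E * a) (hE : E < 2.7182818286) :
    (1 - b)⁻¹ ≤ (1 - a)⁻¹ * Real.exp (20 * (t * a)) := by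
  have h1b0 : (0:ℝ) < 1 - b := by linarith
  have h1a0 : (0:ℝ) < 1 - a := by linarith
  have hr0 : 0 ≤ (b - a) / (1 - b) := div_nonneg (by linarith) h1b0.le
  have hkey : (1 - b)⁻¹ = (1 + (b - a) / (1 - b)) * (1 - a)⁻¹ := by
    field_simp
    ring
  have hta : 0 ≤ t * a := mul_nonneg ht0 ha0.le
  have hr_le : (b - a) / (1 - b) ≤ 20 * (t * a) := by
    have h7 : (b - a) / (1 - b) ≤ (b - a) * 7 := by
      rw [div_le_iff₀ h1b0]
      nlinarith
    nlinarith [mul_nonneg hta (by nlinarith : (0:ℝ) ≤ 20 - 7 * E)]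
  calc (1 - b)⁻¹ = (1 + (b - a) / (1 - b)) * (1 - a)⁻¹ := hkey
    _ ≤ Real.exp (20 * (t * a)) * (1 - a)⁻¹ := by
        have h2 := Real.add_one_le_exp ((b - a) / (1 - b))
        have h3 : 1 + (b - a) / (1 - b) ≤ Real.exp (20 * (t * a)) := by
          have h4 := Real.add_one_le_exp ((b - a) / (1 - b))
          linarith [Real.exp_le_exp.mpr hr_le]
        exact mul_le_mul_of_nonneg_right h3 (by positivity)
    _ = (1 - a)⁻¹ * Real.exp (20 * (t * a)) := by ring

lemma per_prime_bound (σ : ℝ) (hσ0 : 0 < σ) (hσ34 : σ ≤ 3/4) {p : ℕ} (hp : 2 ≤ p)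
    (hσp : σ * Real.log p ≤ 1) :
    (1 - (p:ℝ) ^ (σ - 1))⁻¹ ≤ (1 - (p:ℝ)⁻¹)⁻¹ * Real.exp (20 * σ * (Real.log p / p)) := by
  have hp0 : (0:ℝ) < p := by positivity
  have ha0 : 0 < (p:ℝ)⁻¹ := by positivity
  have hb67 : (p:ℝ) ^ (σ - 1) ≤ 6/7 := rpow_sub_one_le σ hσ0 hσ34 hp
  have hlogp : (0:ℝ) ≤ Real.log p := Real.log_nonneg (by exact_mod_cast (by omega : 1 ≤ p))
  have ht0 : 0 ≤ σ * Real.log p := by positivity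
  have hps : (p:ℝ) ^ σ = Real.exp (σ * Real.log p) := by
    rw [Real.rpow_def_of_pos hp0, mul_comm]
  have hba : (p:ℝ) ^ (σ - 1) = (p:ℝ) ^ σ * (p:ℝ)⁻¹ := by
    rw [Real.rpow_sub hp0, Real.rpow_one, div_eq_mul_inv]
  have hexpt1 : 1 ≤ Real.exp (σ * Real.log p) := Real.one_le_exp ht0
  have hexpte : Real.exp (σ * Real.log p) ≤ Real.exp 1 := Real.exp_le_exp.mpr hσp
  have het : 0 < Real.exp (σ * Real.log p) := Real.exp_pos _
  have hexp : Real.exp (σ * Real.log p) - 1 ≤ (σ * Real.log p) * Real.exp 1 := by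
    have h := Real.add_one_le_exp (-(σ * Real.log p))
    rw [Real.exp_neg] at h
    have h3 := mul_le_mul_of_nonneg_right h het.le
    rw [inv_mul_cancel₀ het.ne'] at h3
    nlinarith
  have hab : (p:ℝ)⁻¹ ≤ (p:ℝ) ^ (σ - 1) := by nlinarith
  have hbma : (p:ℝ) ^ (σ - 1) - (p:ℝ)⁻¹ ≤ (σ * Real.log p) * Real.exp 1 * (p:ℝ)⁻¹ := by
    nlinarith
  have := aux_ratio ha0 hb67 hab ht0 hbma Real.exp_one_lt_d9
  convert this using 3
  field_simp


lemma tsum_ite_le_sum_Icc {s : Set ℕ} (hs0 : 0 ∉ s) (M : ℕ) (F : ℕ → ℝ)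
    (hF : ∀ n, 0 ≤ F n) :
    ∑' m : s, (if (m : ℕ) ≤ M then F m else 0) ≤ ∑ n ∈ Finset.Icc 1 M, F n := by
  classical
  have hfin : {m : s | (m : ℕ) ≤ M}.Finite := by
    have : {m : s | (m : ℕ) ≤ M} = (Subtype.val : s → ℕ) ⁻¹' (Set.Iic M) := rfl
    rw [this]
    exact Set.Finite.preimage (Subtype.val_injective.injOn) (Set.finite_Iic M)
  have hsummable : Summable (fun m : s => (if (m : ℕ) ≤ M then F m else 0)) := by
    apply summable_of_ne_finset_zero (s := hfin.toFinset)
    intro m hm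
    simp only [Set.Finite.mem_toFinset, Set.mem_setOf_eq] at hm
    simp [hm]
  apply Summable.tsum_le_of_sum_le hsummable
  intro t
  calc ∑ m ∈ t, (if (m : ℕ) ≤ M then F m else 0)
      = ∑ m ∈ t.filter (fun m : s => (m : ℕ) ≤ M), F (m : ℕ) := (Finset.sum_filter _ _).symm
    _ = ∑ n ∈ (t.filter (fun m : s => (m : ℕ) ≤ M)).image (Subtype.val), F n := by
        rw [Finset.sum_image (fun a _ b _ h => Subtype.val_injective h)]
    _ ≤ ∑ n ∈ Finset.Icc 1 M, F n := by
        apply Finset.sum_le_sum_of_subset_of_nonneg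
        · intro n hn
          simp only [Finset.mem_image, Finset.mem_filter] at hn
          obtain ⟨m, ⟨_, hmM⟩, rfl⟩ := hn
          have : (m : ℕ) ≠ 0 := fun h => hs0 (h ▸ m.2)
          simp only [Finset.mem_Icc]
          omega
        · intro n _ _
          exact hF n


/-- Mertens-type bound: `∏_{p ≤ N}(1-1/p)⁻¹ ≤ 82 (1 + log N)`. -/
theorem Q_bound {N : ℕ} (hN : 4 ≤ N) :
    ∏ p ∈ (N + 1).primesBelow, (1 - (p : ℝ)⁻¹)⁻¹ ≤ 82 * (1 + Real.log N) := by
  classical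
  set P := (N + 1).primesBelow with hP
  have hfilter : P.filter Nat.Prime = P :=
    Finset.filter_eq_self.mpr (fun p hp => Nat.prime_of_mem_primesBelow hp)
  have hmemP : ∀ p ∈ P, 2 ≤ p ∧ p ≤ N := by
    intro p hp
    obtain ⟨hlt, hpp⟩ := Nat.mem_primesBelow.mp hp
    exact ⟨hpp.two_le, Nat.lt_succ_iff.mp hlt⟩
  -- basic log facts
  have hlog2 := Real.log_two_gt_d9
  have hlog4 : Real.log 4 = 2 * Real.log 2 := by
    rw [show (4:ℝ) = 2 ^ (2:ℕ) by norm_num, Real.log_pow]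
    push_cast; ring
  have hlogN4 : Real.log 4 ≤ Real.log N := by
    apply Real.log_le_log (by norm_num)
    exact_mod_cast hN
  have hlogN1 : 1 < Real.log N := by nlinarith
  have hlogN0 : 0 < Real.log N := by linarith
  set σ : ℝ := (Real.log N)⁻¹ with hσ_def
  have hσ0 : 0 < σ := by positivity
  have hσN : σ * Real.log N = 1 := inv_mul_cancel₀ hlogN0.ne'
  have hσ34 : σ ≤ 3/4 := by
    rw [hσ_def]
    rw [inv_le_comm₀ hlogN0 (by norm_num)]
    nlinarith
  have hσlog4 : σ * Real.log 4 ≤ 1 := by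
    nlinarith
  have hσp : ∀ p ∈ P, σ * Real.log p ≤ 1 := by
    intro p hp
    have h2 : Real.log p ≤ Real.log N := by
      apply Real.log_le_log (by exact_mod_cast (hmemP p hp).1.trans' (by norm_num))
      exact_mod_cast (hmemP p hp).2
    nlinarith
  have hc : σ - 1 < 0 := by linarith
  set Q : ℝ := ∏ p ∈ P, (1 - (p : ℝ)⁻¹)⁻¹ with hQ_def
  have hfac_pos : ∀ p ∈ P, (0:ℝ) < 1 - (p:ℝ)⁻¹ := by
    intro p hp
    have h2 : (2:ℝ) ≤ p := by exact_mod_cast (hmemP p hp).1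
    have : (p:ℝ)⁻¹ ≤ 1/2 := by
      rw [show (1/2 : ℝ) = (2:ℝ)⁻¹ by norm_num]
      exact inv_anti₀ (by norm_num) h2
    linarith
  have hQ0 : 0 ≤ Q := Finset.prod_nonneg (fun p hp => (inv_pos.mpr (hfac_pos p hp)).le)
  have hQ : Q = ∑' m : Nat.factoredNumbers P, ((m : ℕ) : ℝ) ^ (-1 : ℝ) := by
    rw [euler_tsum (by norm_num : (-1:ℝ) < 0) P, hfilter]
    apply Finset.prod_congr rfl
    intro p _
    rw [Real.rpow_neg_one]
  set M : ℕ := N ^ 41 with hM_def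
  have hN0 : (0:ℝ) < N := by positivity
  have hM0 : (0:ℝ) < M := by positivity
  -- pointwise bound
  set s : Set ℕ := Nat.factoredNumbers P with hs_def
  have hs0 : (0:ℕ) ∉ s := fun h => Nat.ne_zero_of_mem_factoredNumbers h rfl
  set g₁ : s → ℝ := fun m => if (m : ℕ) ≤ M then ((m : ℕ) : ℝ) ^ (-1 : ℝ) else 0 with hg₁
  set g₂ : s → ℝ := fun m => (M:ℝ) ^ (-σ) * ((m : ℕ) : ℝ) ^ (σ - 1) with hg₂
  have hm_pos : ∀ m : s, (0:ℝ) < (m : ℕ) := by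
    intro m
    have : (m:ℕ) ≠ 0 := Nat.ne_zero_of_mem_factoredNumbers m.2
    positivity
  have hpoint : ∀ m : s, ((m : ℕ) : ℝ) ^ (-1 : ℝ) ≤ g₁ m + g₂ m := by
    intro m
    have hm0 := hm_pos m
    by_cases hm : (m : ℕ) ≤ M
    · have : g₂ m ≥ 0 := by
        apply mul_nonneg (Real.rpow_nonneg hM0.le _) (Real.rpow_nonneg hm0.le _)
      simp only [hg₁, if_pos hm]
      linarith
    · push_neg at hm
      simp only [hg₁, if_neg (not_le.mpr hm), zero_add, hg₂]
      have hsplit : ((m : ℕ) : ℝ) ^ (-1 : ℝ)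
          = ((m : ℕ) : ℝ) ^ (σ - 1) * ((m : ℕ) : ℝ) ^ (-σ) := by
        rw [← Real.rpow_add hm0]
        congr 1
        ring
      rw [hsplit]
      rw [mul_comm ((M:ℝ) ^ (-σ)) _]
      apply mul_le_mul_of_nonneg_left _ (Real.rpow_nonneg hm0.le _)
      rw [Real.rpow_neg hm0.le, Real.rpow_neg hM0.le]
      apply inv_anti₀ (Real.rpow_pos_of_pos hM0 σ)
      apply Real.rpow_le_rpow hM0.le _ hσ0.le
      exact_mod_cast hm.le
  have hsum_f : Summable (fun m : s => ((m : ℕ) : ℝ) ^ (-1 : ℝ)) :=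
    euler_summable (by norm_num : (-1:ℝ) < 0) P
  have hsum₂ : Summable g₂ := ((euler_summable hc P).mul_left _)
  have hsum₁ : Summable g₁ := by
    have hfin : {m : s | (m : ℕ) ≤ M}.Finite :=
      Set.Finite.preimage (Subtype.val_injective.injOn) (Set.finite_Iic M)
    apply summable_of_ne_finset_zero (s := hfin.toFinset)
    intro m hm
    simp only [Set.Finite.mem_toFinset, Set.mem_setOf_eq] at hm
    simp [hg₁, hm]
  -- combine
  have hQle : Q ≤ (∑' m : s, g₁ m) + (∑' m : s, g₂ m) := by
    rw [hQ, ← Summable.tsum_add hsum₁ hsum₂]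
    exact Summable.tsum_le_tsum hpoint hsum_f (hsum₁.add hsum₂)
  -- bound ∑' g₁
  have h₁ : (∑' m : s, g₁ m) ≤ 1 + 41 * Real.log N := by
    have step1 := tsum_ite_le_sum_Icc hs0 M (fun n => (n : ℝ) ^ (-1 : ℝ))
      (fun n => Real.rpow_nonneg (Nat.cast_nonneg n) _)
    refine step1.trans ?_
    have hsum_eq : ∑ n ∈ Finset.Icc 1 M, ((n : ℝ)) ^ (-1 : ℝ)
        = ((harmonic M : ℚ) : ℝ) := by
      rw [harmonic_eq_sum_Icc]
      push_cast
      apply Finset.sum_congr rfl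
      intro n _
      rw [Real.rpow_neg_one]
    rw [hsum_eq]
    have := harmonic_le_one_add_log M
    have hlogM : Real.log M = 41 * Real.log N := by
      rw [hM_def]
      push_cast
      rw [Real.log_pow]
      push_cast; ring
    rw [hlogM] at this
    exact this
  -- bound ∑' g₂
  have h₂ : (∑' m : s, g₂ m) = (M:ℝ) ^ (-σ) * ∏ p ∈ P, (1 - (p:ℝ) ^ (σ - 1))⁻¹ := by
    rw [hg₂, tsum_mul_left, euler_tsum hc P, hfilter]
  have hfac67 : ∀ p ∈ P, (p:ℝ) ^ (σ - 1) ≤ 6/7 := by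
    intro p hp
    exact rpow_sub_one_le σ hσ0 hσ34 (hmemP p hp).1
  have hprod : ∏ p ∈ P, (1 - (p:ℝ) ^ (σ - 1))⁻¹
      ≤ Q * Real.exp (20 * σ * ∑ p ∈ P, Real.log p / p) := by
    have step : ∏ p ∈ P, (1 - (p:ℝ) ^ (σ - 1))⁻¹
        ≤ ∏ p ∈ P, ((1 - (p:ℝ)⁻¹)⁻¹ * Real.exp (20 * σ * (Real.log p / p))) := by
      apply Finset.prod_le_prod
      · intro p hp
        have := hfac67 p hp
        have h1 : (0:ℝ) < 1 - (p:ℝ) ^ (σ - 1) := by linarith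
        positivity
      · intro p hp
        exact per_prime_bound σ hσ0 hσ34 (hmemP p hp).1 (hσp p hp)
    refine step.trans (le_of_eq ?_)
    rw [Finset.prod_mul_distrib, ← Real.exp_sum, ← Finset.mul_sum, ← hQ_def]
  have hexp_le : Real.exp (20 * σ * ∑ p ∈ P, Real.log p / p) ≤ Real.exp 40 := by
    apply Real.exp_le_exp.mpr
    have hsum_nonneg : 20 * σ * ∑ p ∈ P, Real.log p / p ≤ 20 * σ * (Real.log N + Real.log 4) := by
      apply mul_le_mul_of_nonneg_left (mertens_first N (by omega) (theta_le N)) (by positivity)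
    nlinarith
  have hMσ : (M:ℝ) ^ (-σ) = Real.exp (-41) := by
    rw [hM_def]
    push_cast
    rw [← Real.rpow_natCast (N:ℝ) 41, ← Real.rpow_mul hN0.le,
      Real.rpow_def_of_pos hN0]
    congr 1
    push_cast
    nlinarith
  have htail : (∑' m : s, g₂ m) ≤ Q * Real.exp (-1) := by
    rw [h₂, hMσ]
    calc Real.exp (-41) * ∏ p ∈ P, (1 - (p:ℝ) ^ (σ - 1))⁻¹
        ≤ Real.exp (-41) * (Q * Real.exp 40) := by
          apply mul_le_mul_of_nonneg_left _ (Real.exp_pos _).le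
          calc ∏ p ∈ P, (1 - (p:ℝ) ^ (σ - 1))⁻¹
              ≤ Q * Real.exp (20 * σ * ∑ p ∈ P, Real.log p / p) := hprod
            _ ≤ Q * Real.exp 40 := mul_le_mul_of_nonneg_left hexp_le hQ0
      _ = Q * Real.exp (-1) := by
          rw [show Real.exp (-1) = Real.exp (-41) * Real.exp 40 by
            rw [← Real.exp_add]; norm_num]
          ring
  have hexp1 : Real.exp (-1) ≤ 1/2 := by
    rw [Real.exp_neg]
    rw [inv_le_comm₀ (Real.exp_pos 1) (by norm_num)]
    have := Real.add_one_le_exp 1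
    linarith
  have hhalf : Q * Real.exp (-1) ≤ Q * (1/2) := mul_le_mul_of_nonneg_left hexp1 hQ0
  have : Q ≤ 1 + 41 * Real.log N + Q * (1/2) := by linarith
  linarith

end AuxiliaryLemmas

open Nat in
/-- `∑_{d ∈ U_z(U)} 1/d = O(V(z) + log z + V(z) log U)` for `z ≤ U^A`, `0 < A < 1/2`. -/
theorem rough_harmonic_sum (A : ℝ) (hA0 : 0 < A) (hA : A < 1 / 2) :
    ∃ C : ℝ, 0 < C ∧
      ∀ (U : ℝ) (z : ℕ), 1 ≤ U → 2 ≤ z → (z : ℝ) ≤ U ^ A →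
        ∑ d ∈ (Finset.Icc 1 ⌊U⌋₊).filter
            (fun d : ℕ => Nat.gcd d (primorialBelowNat z) = 1), (1 : ℝ) / d ≤
          C * (mertensVNat z + Real.log z + mertensVNat z * Real.log U) := by
  classical
  refine ⟨82, by norm_num, ?_⟩
  intro U z hU hz hzU
  have hU0 : (0:ℝ) < U := by linarith
  have hUA2 : (2:ℝ) ≤ U ^ A := le_trans (by exact_mod_cast hz) hzU
  have hUA1 : (1:ℝ) ≤ U ^ A := by linarith
  have hU4 : (4:ℝ) ≤ U := by
    have h2 : (2:ℝ) ≤ 1/A := by rw [le_div_iff₀ hA0]; linarith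
    have e1 : (U ^ A) ^ (2:ℝ) ≤ (U ^ A) ^ ((1:ℝ)/A) :=
      Real.rpow_le_rpow_of_exponent_le hUA1 h2
    have e2 : (U ^ A) ^ ((1:ℝ)/A) = U := by
      rw [← Real.rpow_mul hU0.le, mul_one_div, div_self hA0.ne', Real.rpow_one]
    have e3 : (2:ℝ) ^ (2:ℝ) ≤ (U ^ A) ^ (2:ℝ) :=
      Real.rpow_le_rpow (by norm_num) hUA2 (by norm_num)
    have e4 : (2:ℝ) ^ (2:ℝ) = 4 := by
      rw [show (2:ℝ) = ((2:ℕ):ℝ) by norm_num, Real.rpow_natCast]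
      norm_num
    rw [e2] at e1
    rw [e4] at e3
    linarith
  have hzU' : (z : ℝ) ≤ U := by
    refine hzU.trans ?_
    calc U ^ A ≤ U ^ (1:ℝ) :=
          Real.rpow_le_rpow_of_exponent_le (by linarith) (by linarith)
      _ = U := Real.rpow_one U
  set N := ⌊U⌋₊ with hN_def
  have hN4 : 4 ≤ N := Nat.le_floor (by exact_mod_cast hU4)
  have hzN : z ≤ N := Nat.le_floor hzU'
  have hNU : (N:ℝ) ≤ U := Nat.floor_le hU0.le
  set P := (N + 1).primesBelow with hP_def
  set Pz := z.primesBelow with hPz_def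
  set S := P \ Pz with hS_def
  have hPzP : Pz ⊆ P := by
    intro p hp
    rw [Nat.mem_primesBelow] at hp ⊢
    exact ⟨by omega, hp.2⟩
  have hmemP : ∀ p ∈ P, 2 ≤ p := fun p hp => (Nat.prime_of_mem_primesBelow hp).two_le
  have hfac_pos : ∀ p ∈ P, (0:ℝ) < 1 - (p:ℝ)⁻¹ := by
    intro p hp
    have h2 : (2:ℝ) ≤ p := by exact_mod_cast hmemP p hp
    have : (p:ℝ)⁻¹ ≤ 1/2 := by
      rw [show (1/2 : ℝ) = (2:ℝ)⁻¹ by norm_num]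
      exact inv_anti₀ (by norm_num) h2
    linarith
  have hfilterS : S.filter Nat.Prime = S :=
    Finset.filter_eq_self.mpr
      (fun p hp => Nat.prime_of_mem_primesBelow (Finset.mem_sdiff.mp hp).1)
  -- Step 1 : the rough sum is at most the sum over S-factored numbers
  have hsummS := euler_summable (by norm_num : (-1:ℝ) < 0) S
  have hindicator : Summable
      (Set.indicator (Nat.factoredNumbers S) (fun n : ℕ => (n:ℝ) ^ (-1:ℝ))) :=
    summable_subtype_iff_indicator.mp hsummS
  have hmem : ∀ d ∈ (Finset.Icc 1 N).filter
      (fun d : ℕ => Nat.gcd d (primorialBelowNat z) = 1), d ∈ Nat.factoredNumbers S := by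
    intro d hd
    rw [Finset.mem_filter, Finset.mem_Icc] at hd
    obtain ⟨⟨hd1, hdN⟩, hgcd⟩ := hd
    rw [Nat.mem_factoredNumbers']
    intro p hpp hpd
    have hpN : p < N + 1 := Nat.lt_succ_of_le ((Nat.le_of_dvd (by omega) hpd).trans hdN)
    refine Finset.mem_sdiff.mpr ⟨Nat.mem_primesBelow.mpr ⟨hpN, hpp⟩, fun hmem' => ?_⟩
    have hdvdP : p ∣ primorialBelowNat z := Finset.dvd_prod_of_mem _ hmem'
    have : p ∣ Nat.gcd d (primorialBelowNat z) := Nat.dvd_gcd hpd hdvdP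
    rw [hgcd] at this
    exact hpp.ne_one (Nat.dvd_one.mp this)
  have step1 : ∑ d ∈ (Finset.Icc 1 N).filter
      (fun d : ℕ => Nat.gcd d (primorialBelowNat z) = 1), (1:ℝ)/d
      ≤ ∑' m : Nat.factoredNumbers S, ((m : ℕ) : ℝ) ^ (-1:ℝ) := by
    have htseq : ∑' m : Nat.factoredNumbers S, ((m : ℕ) : ℝ) ^ (-1:ℝ)
        = ∑' n : ℕ, Set.indicator (Nat.factoredNumbers S)
            (fun n : ℕ => (n:ℝ) ^ (-1:ℝ)) n :=
      _root_.tsum_subtype (Nat.factoredNumbers S) (fun n : ℕ => (n:ℝ) ^ (-1:ℝ))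
    rw [htseq]
    refine le_trans (le_of_eq ?_)
      (Summable.sum_le_tsum ((Finset.Icc 1 N).filter
          (fun d : ℕ => Nat.gcd d (primorialBelowNat z) = 1))
        (fun i _ => Set.indicator_nonneg
          (fun n _ => Real.rpow_nonneg (Nat.cast_nonneg n) _) i) hindicator)
    apply Finset.sum_congr rfl
    intro d hd
    rw [Set.indicator_of_mem (hmem d hd), Real.rpow_neg_one, one_div]
  -- Step 2 : Euler product
  have step2 : ∑' m : Nat.factoredNumbers S, ((m : ℕ) : ℝ) ^ (-1:ℝ)
      = ∏ p ∈ S, (1 - (p:ℝ)⁻¹)⁻¹ := by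
    rw [euler_tsum (by norm_num : (-1:ℝ) < 0) S, hfilterS]
    exact Finset.prod_congr rfl (fun p _ => by rw [Real.rpow_neg_one])
  -- Step 3 : factor out V(z)
  have hVeq : mertensVNat z = ∏ p ∈ Pz, (1 - (p:ℝ)⁻¹) := by
    rw [mertensVNat]
    exact Finset.prod_congr rfl (fun p _ => by rw [one_div])
  have hVone : mertensVNat z * ∏ p ∈ Pz, (1 - (p:ℝ)⁻¹)⁻¹ = 1 := by
    rw [hVeq, ← Finset.prod_mul_distrib]
    apply Finset.prod_eq_one
    intro p hp
    exact mul_inv_cancel₀ (hfac_pos p (hPzP hp)).ne'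
  have hsd : (∏ p ∈ S, (1 - (p:ℝ)⁻¹)⁻¹) * ∏ p ∈ Pz, (1 - (p:ℝ)⁻¹)⁻¹
      = ∏ p ∈ P, (1 - (p:ℝ)⁻¹)⁻¹ := Finset.prod_sdiff hPzP
  have step3 : ∏ p ∈ S, (1 - (p:ℝ)⁻¹)⁻¹
      = mertensVNat z * ∏ p ∈ P, (1 - (p:ℝ)⁻¹)⁻¹ := by
    calc ∏ p ∈ S, (1 - (p:ℝ)⁻¹)⁻¹
        = (∏ p ∈ S, (1 - (p:ℝ)⁻¹)⁻¹) *
            (mertensVNat z * ∏ p ∈ Pz, (1 - (p:ℝ)⁻¹)⁻¹) := by rw [hVone, mul_one]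
      _ = mertensVNat z *
            ((∏ p ∈ S, (1 - (p:ℝ)⁻¹)⁻¹) * ∏ p ∈ Pz, (1 - (p:ℝ)⁻¹)⁻¹) := by ring
      _ = mertensVNat z * ∏ p ∈ P, (1 - (p:ℝ)⁻¹)⁻¹ := by rw [hsd]
  -- Step 4 : Mertens-type bound
  have step4 : ∏ p ∈ P, (1 - (p:ℝ)⁻¹)⁻¹ ≤ 82 * (1 + Real.log N) := Q_bound hN4
  have hV0 : 0 ≤ mertensVNat z := by
    rw [hVeq]
    exact Finset.prod_nonneg (fun p hp => (hfac_pos p (hPzP hp)).le)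
  have hlogN_le : Real.log N ≤ Real.log U := by
    apply Real.log_le_log (by positivity) hNU
  have hlogU0 : 0 ≤ Real.log U := Real.log_nonneg (by linarith)
  have hlogz0 : 0 ≤ Real.log z :=
    Real.log_nonneg (by exact_mod_cast (by omega : 1 ≤ z))
  have hlogN0 : 0 ≤ Real.log N := Real.log_nonneg (by exact_mod_cast (by omega : 1 ≤ N))
  calc ∑ d ∈ (Finset.Icc 1 N).filter
        (fun d : ℕ => Nat.gcd d (primorialBelowNat z) = 1), (1:ℝ)/d
      ≤ mertensVNat z * ∏ p ∈ P, (1 - (p:ℝ)⁻¹)⁻¹ := by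
        rw [← step3, ← step2]; exact step1
    _ ≤ mertensVNat z * (82 * (1 + Real.log U)) := by
        apply mul_le_mul_of_nonneg_left _ hV0
        calc ∏ p ∈ P, (1 - (p:ℝ)⁻¹)⁻¹ ≤ 82 * (1 + Real.log N) := step4
          _ ≤ 82 * (1 + Real.log U) := by linarith
    _ = 82 * (mertensVNat z + mertensVNat z * Real.log U) := by ring
    _ ≤ 82 * (mertensVNat z + Real.log z + mertensVNat z * Real.log U) := by linarith
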